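/- Let f be convex and differentiable on ℝⁿ. If x is a τ-stationary point of f(x) + λ‖x‖₀ for some τ > 0, then x is a local minimizer of f(x) + λ‖x‖₀. -/

import Mathlib

open Classical Finset

-- coordinate bound
lemma coord_le_norm {n : ℕ} (z : EuclideanSpace ℝ (Fin n)) (i : Fin n) : |z i| ≤ ‖z‖ := by
  rw [EuclideanSpace.norm_eq]
  calc |z i| = Real.sqrt (‖z i‖ ^ 2) := by
        rw [Real.sqrt_sq_eq_abs]; simp [Real.norm_eq_abs, abs_abs]
    _ ≤ _ := by
        apply Real.sqrt_le_sqrt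
        exact Finset.single_le_sum (f := fun j => ‖z j‖ ^ 2)
          (fun j _ => sq_nonneg _) (Finset.mem_univ i)

-- gradient inequality for convex functions
lemma conv_grad_ineq {n : ℕ} {f : EuclideanSpace ℝ (Fin n) → ℝ}
    (hconv : ConvexOn ℝ Set.univ f) {x g : EuclideanSpace ℝ (Fin n)}
    (hg : HasGradientAt f g x) (y : EuclideanSpace ℝ (Fin n)) :
    f x + (inner ℝ g (y - x) : ℝ) ≤ f y := by
  set φ : ℝ → ℝ := fun t => f (AffineMap.lineMap x y t) with hφ
  have hconvφ : ConvexOn ℝ Set.univ φ := by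
    have := hconv.comp_affineMap (AffineMap.lineMap x y)
    simp only [Set.preimage_univ] at this
    exact this
  have hline : HasDerivAt (fun t : ℝ => AffineMap.lineMap x y t) (y - x) 0 := by
    have h1 : (fun t : ℝ => (AffineMap.lineMap x y) t) = fun t : ℝ => t • (y - x) + x := by
      funext t
      rw [AffineMap.lineMap_apply_module]
      module
    rw [h1]
    simpa using ((hasDerivAt_id (0:ℝ)).smul_const (y - x)).add_const x
  have hd : HasDerivAt φ (inner ℝ g (y - x) : ℝ) 0 := by
    have h0 : AffineMap.lineMap x y (0 : ℝ) = x := by simp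
    have := (h0 ▸ hg.hasFDerivAt).comp_hasDerivAt 0 hline
    exact this
  have hslope := hconvφ.le_slope_of_hasDerivAt (Set.mem_univ 0) (Set.mem_univ 1)
    one_pos hd
  have : slope φ 0 1 = f y - f x := by
    simp [slope_def_field, φ]
  rw [this] at hslope
  linarith

noncomputable def norm0 {n : ℕ} (x : EuclideanSpace ℝ (Fin n)) : ℕ :=
  (Finset.univ.filter fun i => x i ≠ 0).card

/-- For convex differentiable `f`, a τ-stationary point of `f + λ‖·‖₀` is a
local minimizer of `f + λ‖·‖₀`. -/
theorem stmt5 {n : ℕ} (f : EuclideanSpace ℝ (Fin n) → ℝ)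
    (G : EuclideanSpace ℝ (Fin n) → EuclideanSpace ℝ (Fin n))
    (lam τ : ℝ) (hlam : 0 < lam) (hτ : 0 < τ)
    (hgrad : ∀ x, HasGradientAt f (G x) x)
    (hconv : ConvexOn ℝ Set.univ f)
    (x : EuclideanSpace ℝ (Fin n))
    (hstat1 : ∀ i, x i ≠ 0 → G x i = 0 ∧ Real.sqrt (2 * τ * lam) ≤ |x i|)
    (hstat2 : ∀ i, x i = 0 → τ * |G x i| ≤ Real.sqrt (2 * τ * lam)) :
    ∃ ε > 0, ∀ y : EuclideanSpace ℝ (Fin n), ‖y - x‖ < ε →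
      f x + lam * (norm0 x : ℝ) ≤ f y + lam * (norm0 y : ℝ) := by
  set s := Real.sqrt (2 * τ * lam) with hsdef
  have hs0 : 0 < s := Real.sqrt_pos.mpr (by positivity)
  refine ⟨min s (lam * τ / s), by positivity, fun y hy => ?_⟩
  have hys : ‖y - x‖ < s := lt_of_lt_of_le hy (min_le_left _ _)
  have hyl : ‖y - x‖ < lam * τ / s := lt_of_lt_of_le hy (min_le_right _ _)
  have hcoord : ∀ i, |y i - x i| ≤ ‖y - x‖ := by
    intro i
    have := coord_le_norm (y - x) i
    simpa using this
  have hsupp : ∀ i, x i ≠ 0 → y i ≠ 0 := by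
    intro i hxi hyi
    have h1 := (hstat1 i hxi).2
    have h2 := hcoord i
    rw [hyi, zero_sub, abs_neg] at h2
    linarith
  set A := Finset.univ.filter (fun i => x i ≠ 0) with hA
  set B := Finset.univ.filter (fun i => x i = 0 ∧ y i ≠ 0) with hB
  have hinner : (inner ℝ (G x) (y - x) : ℝ) = ∑ i, G x i * (y i - x i) := by
    rw [PiLp.inner_apply]
    simp [RCLike.inner_apply, mul_comm]
  have hsum : (∑ i, G x i * (y i - x i)) = ∑ i ∈ B, G x i * (y i - x i) := by
    refine (Finset.sum_subset (Finset.subset_univ B) ?_).symm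
    intro i _ hiB
    simp only [hB, Finset.mem_filter, Finset.mem_univ, true_and, not_and, not_not] at hiB
    by_cases hxi : x i = 0
    · simp [hxi, hiB hxi]
    · rw [(hstat1 i hxi).1, zero_mul]
  have hterm : ∀ i ∈ B, -lam ≤ G x i * (y i - x i) := by
    intro i hi
    simp only [hB, Finset.mem_filter, Finset.mem_univ, true_and] at hi
    obtain ⟨hxi, _⟩ := hi
    have h1 : |G x i| ≤ s / τ := by
      rw [le_div_iff₀ hτ]
      have := hstat2 i hxi
      linarith [this]
    have h2 : |y i - x i| ≤ ‖y - x‖ := hcoord i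
    have h3 : |G x i * (y i - x i)| ≤ (s / τ) * (lam * τ / s) := by
      rw [abs_mul]
      exact mul_le_mul h1 (le_of_lt (lt_of_le_of_lt h2 hyl)) (abs_nonneg _) (by positivity)
    have h4 : (s / τ) * (lam * τ / s) = lam := by field_simp
    have h5 := neg_abs_le (G x i * (y i - x i))
    rw [h4] at h3
    linarith
  have hlow : -(lam * B.card) ≤ (inner ℝ (G x) (y - x) : ℝ) := by
    rw [hinner, hsum]
    calc -(lam * B.card) = ∑ _i ∈ B, (-lam) := by
          rw [Finset.sum_const, nsmul_eq_mul]; ring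
      _ ≤ _ := Finset.sum_le_sum hterm
  have hdisj : Disjoint A B := by
    rw [Finset.disjoint_left]
    intro i hiA hiB
    simp only [hA, Finset.mem_filter, Finset.mem_univ, true_and] at hiA
    simp only [hB, Finset.mem_filter, Finset.mem_univ, true_and] at hiB
    exact hiA hiB.1
  have hcard : (norm0 x : ℝ) + B.card ≤ (norm0 y : ℝ) := by
    have hsub : A ∪ B ⊆ Finset.univ.filter (fun i => y i ≠ 0) := by
      intro i hi
      rcases Finset.mem_union.mp hi with h | h
      · simp only [hA, Finset.mem_filter, Finset.mem_univ, true_and] at h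
        simp only [Finset.mem_filter, Finset.mem_univ, true_and]
        exact hsupp i h
      · simp only [hB, Finset.mem_filter, Finset.mem_univ, true_and] at h
        simp only [Finset.mem_filter, Finset.mem_univ, true_and]
        exact h.2
    have hc := Finset.card_le_card hsub
    rw [Finset.card_union_of_disjoint hdisj] at hc
    have : norm0 x + B.card ≤ norm0 y := hc
    exact_mod_cast this
  have hfy : f x + (inner ℝ (G x) (y - x) : ℝ) ≤ f y := conv_grad_ineq hconv (hgrad x) y
  have hmul : lam * ((norm0 x : ℝ) + B.card) ≤ lam * (norm0 y : ℝ) :=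
    mul_le_mul_of_nonneg_left hcard hlam.le
  nlinarith [hfy, hlow, hmul]
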